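/- Suppose g, h ∈ G(F,F') are hyperbolic and translation compatible. Then: (i) the product gh is hyperbolic and is translation compatible with both g and h; (ii) ω_-(g) ≠ ω_+(h); (iii) g^{-1} and h^{-1} are translation compatible. -/

import Mathlib

/-- `p : ℤ → V` is a translation axis for `g` with translation length `l ≥ 1`:
`p` is an injective bi-infinite path, along which `g` translates by `l` steps.
This witnesses that `g` is hyperbolic with `axis(g) = p(ℤ)` and `l(g) = l`. -/
def IsTransAxis {V : Type*} (T : SimpleGraph V) (g : Equiv.Perm V) (p : ℤ → V) (l : ℕ) :
    Prop :=
  Function.Injective p ∧ (∀ i : ℤ, T.Adj (p i) (p (i + 1))) ∧ 1 ≤ l ∧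
    ∀ i : ℤ, g (p i) = p (i + l)

/-- Two parametrized axes are translation compatible: on common vertices, the two
translation orders agree. -/
def TransCompat {V : Type*} (p q : ℤ → V) : Prop :=
  ∀ i j i' j' : ℤ, p i = q i' → p j = q j' → (i ≤ j ↔ i' ≤ j')

namespace TC14
open SimpleGraph

variable {V : Type*} {T : SimpleGraph V}

def lineWalk (p : ℤ → V) (hadj : ∀ i : ℤ, T.Adj (p i) (p (i + 1))) (i : ℤ) :
    (n : ℕ) → T.Walk (p i) (p (i + n))
  | 0 => SimpleGraph.Walk.nil.copy rfl (congrArg p (by norm_num))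
  | n + 1 => (SimpleGraph.Walk.cons (hadj i) (lineWalk p hadj (i + 1) n)).copy rfl
      (congrArg p (by push_cast; ring))

lemma lineWalk_length (p : ℤ → V) (hadj : ∀ i : ℤ, T.Adj (p i) (p (i + 1))) (i : ℤ) (n : ℕ) :
    (lineWalk p hadj i n).length = n := by
  induction n generalizing i with
  | zero => simp [lineWalk]
  | succ n ih => simp [lineWalk, ih]

lemma lineWalk_getVert (p : ℤ → V) (hadj : ∀ i : ℤ, T.Adj (p i) (p (i + 1))) (i : ℤ) (n : ℕ)
    (r : ℕ) (hr : r ≤ n) : (lineWalk p hadj i n).getVert r = p (i + r) := by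
  induction n generalizing i r with
  | zero => interval_cases r; simp [lineWalk]
  | succ n ih =>
    rcases Nat.eq_zero_or_pos r with rfl | hr0
    · simp [lineWalk]
    · obtain ⟨r, rfl⟩ := Nat.exists_eq_succ_of_ne_zero hr0.ne'
      have := ih (i + 1) r (by omega)
      simp only [lineWalk, Walk.getVert_copy, Walk.getVert_cons_succ]
      rw [this]; congr 1; push_cast; ring

lemma lineWalk_isPath (p : ℤ → V) (hadj : ∀ i : ℤ, T.Adj (p i) (p (i + 1))) (i : ℤ) (n : ℕ)
    (hwin : ∀ r1 r2 : ℕ, r1 ≤ n → r2 ≤ n → p (i + r1) = p (i + r2) → r1 = r2) :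
    (lineWalk p hadj i n).IsPath := by
  induction n generalizing i with
  | zero => simp [lineWalk]
  | succ n ih =>
    simp only [lineWalk, Walk.isPath_copy, Walk.cons_isPath_iff]
    constructor
    · apply ih
      intro r1 r2 h1 h2 he
      have : (1 + r1 : ℕ) = 1 + r2 := by
        apply hwin (1 + r1) (1 + r2) (by omega) (by omega)
        convert he using 2 <;> push_cast <;> ring
      omega
    · rw [Walk.mem_support_iff_exists_getVert]
      rintro ⟨r, hv, hlen⟩
      rw [lineWalk_length] at hlen
      rw [lineWalk_getVert p hadj _ n r hlen] at hv
      have : (1 + r : ℕ) = 0 := by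
        apply hwin (1 + r) 0 (by omega) (by omega)
        rw [show i + ((1 + r : ℕ) : ℤ) = i + 1 + r by push_cast; ring, hv]
        norm_num
      omega

theorem path_eq (hacyc : T.IsAcyclic) {u v : V} (w1 w2 : T.Walk u v) (h1 : w1.IsPath)
    (h2 : w2.IsPath) : w1 = w2 :=
  congrArg Subtype.val (hacyc.path_unique ⟨w1, h1⟩ ⟨w2, h2⟩)

lemma line_shift_ne (hacyc : T.IsAcyclic) (p : ℤ → V)
    (hadj : ∀ i : ℤ, T.Adj (p i) (p (i + 1)))
    (hnb : ∀ i : ℤ, p (i + 2) ≠ p i) :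
    ∀ s : ℕ, 1 ≤ s → ∀ i : ℤ, p (i + s) ≠ p i := by
  intro s
  induction s using Nat.strong_induction_on with
  | _ s IH =>
  intro hs i he
  have hwin : ∀ (j : ℤ) (m : ℕ), m < s → ∀ r1 r2 : ℕ, r1 ≤ m → r2 ≤ m →
      p (j + r1) = p (j + r2) → r1 = r2 := by
    intro j m hm r1 r2 h1 h2 hpe
    by_contra hne
    rcases Nat.lt_or_ge r1 r2 with hlt | hge
    · exact IH (r2 - r1) (by omega) (by omega) (j + r1)
        (by rw [show (j + (r1:ℤ)) + ((r2 - r1 : ℕ) : ℤ) = j + r2 by push_cast; omega]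
            exact hpe.symm)
    · exact IH (r1 - r2) (by omega) (by omega) (j + r2)
        (by rw [show (j + (r2:ℤ)) + ((r1 - r2 : ℕ) : ℤ) = j + r1 by push_cast; omega]
            exact hpe)
  match s, hs, he, hwin, IH with
  | 1, _, he, _, _ => exact (hadj i).ne' (by simpa using he)
  | 2, _, he, _, _ => exact hnb i (by simpa using he)
  | (m+3), _, he, hwin, IH =>
    have h1 : T.Adj (p i) (p (i+1)) := hadj i
    let w1 : T.Walk (p i) (p (i+1)) := Walk.cons h1 Walk.nil
    have hw1 : w1.IsPath := by
      simp only [w1, Walk.cons_isPath_iff, Walk.isPath_iff_eq_nil, Walk.support_nil]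
      exact ⟨trivial, by simp only [List.mem_singleton]; exact fun hcon => (hadj i).ne hcon⟩
    have ecast : p ((i+1) + ((m+2 : ℕ) : ℤ)) = p i := by
      rw [show (i+1) + ((m+2 : ℕ) : ℤ) = i + ((m+3 : ℕ) : ℤ) by push_cast; ring, he]
    let w2 : T.Walk (p i) (p (i+1)) :=
      ((lineWalk p hadj (i+1) (m+2)).copy rfl ecast).reverse
    have hw2 : w2.IsPath := by
      apply Walk.IsPath.reverse
      rw [Walk.isPath_copy]
      exact lineWalk_isPath p hadj (i+1) (m+2)
        (fun r1 r2 a b c => hwin (i+1) (m+2) (by omega) r1 r2 a b c)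
    have := congrArg Walk.length (path_eq hacyc w1 w2 hw1 hw2)
    simp only [w1, w2, Walk.length_cons, Walk.length_nil, Walk.length_reverse,
      Walk.length_copy, lineWalk_length] at this
    omega

lemma line_injective (hacyc : T.IsAcyclic) (p : ℤ → V)
    (hadj : ∀ i : ℤ, T.Adj (p i) (p (i + 1)))
    (hnb : ∀ i : ℤ, p (i + 2) ≠ p i) : Function.Injective p := by
  intro i j he
  by_contra hne
  rcases lt_trichotomy i j with hlt | heq | hlt
  · exact line_shift_ne hacyc p hadj hnb (j - i).toNat (by omega) i
      (by rw [show i + (((j - i).toNat : ℕ) : ℤ) = j by omega]; exact he.symm)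
  · exact hne heq
  · exact line_shift_ne hacyc p hadj hnb (i - j).toNat (by omega) j
      (by rw [show j + (((i - j).toNat : ℕ) : ℤ) = i by omega]; exact he)

lemma line_path (p : ℤ → V) (hadj : ∀ i : ℤ, T.Adj (p i) (p (i + 1)))
    (hinj : Function.Injective p) (i j : ℤ) :
    ∃ w : T.Walk (p i) (p j), w.IsPath ∧ w.length = (j - i).natAbs := by
  have hwin : ∀ (b : ℤ) (n : ℕ), ∀ r1 r2 : ℕ, r1 ≤ n → r2 ≤ n →
      p (b + r1) = p (b + r2) → r1 = r2 := by
    intro b n r1 r2 _ _ hpe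
    have := hinj hpe
    omega
  rcases le_total i j with hle | hle
  · refine ⟨(lineWalk p hadj i (j - i).toNat).copy rfl (congrArg p (by omega)), ?_, ?_⟩
    · rw [Walk.isPath_copy]
      exact lineWalk_isPath p hadj i _ (hwin i _)
    · rw [Walk.length_copy, lineWalk_length]; omega
  · refine ⟨((lineWalk p hadj j (i - j).toNat).copy rfl (congrArg p (by omega))).reverse, ?_, ?_⟩
    · apply Walk.IsPath.reverse
      rw [Walk.isPath_copy]
      exact lineWalk_isPath p hadj j _ (hwin j _)
    · rw [Walk.length_reverse, Walk.length_copy, lineWalk_length]; omega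

lemma common_natAbs (hacyc : T.IsAcyclic) (p q : ℤ → V)
    (hpadj : ∀ i : ℤ, T.Adj (p i) (p (i + 1))) (hpinj : Function.Injective p)
    (hqadj : ∀ i : ℤ, T.Adj (q i) (q (i + 1))) (hqinj : Function.Injective q)
    {i j i' j' : ℤ} (hi : p i = q i') (hj : p j = q j') :
    (j - i).natAbs = (j' - i').natAbs := by
  obtain ⟨w1, h1, l1⟩ := line_path p hpadj hpinj i j
  obtain ⟨w2, h2, l2⟩ := line_path q hqadj hqinj i' j'
  have := congrArg Walk.length (path_eq hacyc w1 (w2.copy hi.symm hj.symm) h1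
    ((Walk.isPath_copy _ _ _).2 h2))
  rw [l1, Walk.length_copy, l2] at this
  exact this

lemma transCompat_of_pair (hacyc : T.IsAcyclic) (p q : ℤ → V)
    (hpadj : ∀ i : ℤ, T.Adj (p i) (p (i + 1))) (hpinj : Function.Injective p)
    (hqadj : ∀ i : ℤ, T.Adj (q i) (q (i + 1))) (hqinj : Function.Injective q)
    {a b a' b' : ℤ} (hab : a < b) (hab' : a' < b')
    (ha : p a = q a') (hb : p b = q b') : TransCompat p q := by
  intro i j i' j' hi hj
  have e1 := common_natAbs hacyc p q hpadj hpinj hqadj hqinj ha hb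
  have e2 := common_natAbs hacyc p q hpadj hpinj hqadj hqinj ha hi
  have e3 := common_natAbs hacyc p q hpadj hpinj hqadj hqinj hb hi
  have e4 := common_natAbs hacyc p q hpadj hpinj hqadj hqinj ha hj
  have e5 := common_natAbs hacyc p q hpadj hpinj hqadj hqinj hb hj
  omega

lemma common_seg (hacyc : T.IsAcyclic) (p q : ℤ → V)
    (hpadj : ∀ i : ℤ, T.Adj (p i) (p (i + 1))) (hpinj : Function.Injective p)
    (hqadj : ∀ i : ℤ, T.Adj (q i) (q (i + 1))) (hqinj : Function.Injective q)
    {i i' : ℤ} (hi : p i = q i') (n : ℕ) (hn : p (i + n) = q (i' + n))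
    (r : ℕ) (hr : r ≤ n) : p (i + r) = q (i' + r) := by
  have hwin : ∀ (pp : ℤ → V), Function.Injective pp → ∀ (b : ℤ) (m : ℕ), ∀ r1 r2 : ℕ,
      r1 ≤ m → r2 ≤ m → pp (b + r1) = pp (b + r2) → r1 = r2 := by
    intro pp hppinj b m r1 r2 _ _ hpe
    have := hppinj hpe
    omega
  have heq := path_eq hacyc (lineWalk p hpadj i n)
    ((lineWalk q hqadj i' n).copy hi.symm hn.symm)
    (lineWalk_isPath p hpadj i n (hwin p hpinj i n))
    ((Walk.isPath_copy _ _ _).2 (lineWalk_isPath q hqadj i' n (hwin q hqinj i' n)))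
  have := congrArg (fun w => Walk.getVert w r) heq
  simp only [Walk.getVert_copy] at this
  rw [lineWalk_getVert p hpadj i n r hr, lineWalk_getVert q hqadj i' n r hr] at this
  exact this

lemma zpow_succ_apply (f : Equiv.Perm V) (q : ℤ) (x : V) : (f ^ (q+1)) x = f ((f^q) x) := by
  rw [add_comm, zpow_one_add]; rfl

lemma zpow_comm_apply (f : Equiv.Perm V) (q : ℤ) (x : V) : f ((f^q) x) = (f^q) (f x) := by
  rw [← zpow_succ_apply, zpow_add_one]; rfl

lemma adj_transfer_inv (e : Equiv.Perm V) (he : ∀ u w, T.Adj u w ↔ T.Adj (e u) (e w)) :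
    ∀ u w, T.Adj u w ↔ T.Adj (e⁻¹ u) (e⁻¹ w) := by
  intro u w
  conv_lhs => rw [show u = e (e⁻¹ u) by simp, show w = e (e⁻¹ w) by simp]
  exact (he _ _).symm

lemma adj_transfer_zpow (f : Equiv.Perm V) (hf : ∀ u w, T.Adj u w ↔ T.Adj (f u) (f w)) :
    ∀ (z : ℤ) (u w : V), T.Adj u w ↔ T.Adj ((f^z) u) ((f^z) w) := by
  intro z
  induction z using Int.induction_on with
  | zero => simp
  | succ n ih =>
    intro u w
    rw [ih u w, hf ((f^(n:ℤ)) u) ((f^(n:ℤ)) w), ← zpow_succ_apply, ← zpow_succ_apply]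
  | pred n ih =>
    intro u w
    have key : ∀ x : V, (f ^ (-(n:ℤ) - 1)) x = f⁻¹ ((f ^ (-(n:ℤ))) x) := by
      intro x
      rw [show -(n:ℤ) - 1 = -1 + -(n:ℤ) by ring, zpow_add, zpow_neg_one]; rfl
    rw [ih u w, adj_transfer_inv f hf ((f^(-(n:ℤ))) u) ((f^(-(n:ℤ))) w), ← key, ← key]

lemma assemble_apply (f : Equiv.Perm V) (L : ℕ) (hL : 0 < L) (γ : ℤ → V) (q r : ℤ)
    (h0 : 0 ≤ r) (hr : r < L) :
    (fun i : ℤ => (f ^ (i / (L:ℤ))) (γ (i % (L:ℤ)))) ((L:ℤ) * q + r) = (f ^ q) (γ r) := by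
  have hL' : (0:ℤ) < L := by exact_mod_cast hL
  have h : ((L:ℤ)*q + r) / (L:ℤ) = q ∧ ((L:ℤ)*q + r) % (L:ℤ) = r :=
    (Int.ediv_emod_unique hL').mpr ⟨by ring, h0, hr⟩
  show (f ^ (((L:ℤ)*q + r) / (L:ℤ))) (γ (((L:ℤ)*q + r) % (L:ℤ))) = (f ^ q) (γ r)
  rw [h.1, h.2]

lemma assemble_eval (f : Equiv.Perm V) (L : ℕ) (hL : 0 < L) (γ : ℤ → V) (r : ℤ)
    (h0 : 0 ≤ r) (hr : r < L) :
    (fun i : ℤ => (f ^ (i / (L:ℤ))) (γ (i % (L:ℤ)))) r = γ r := by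
  have h := assemble_apply f L hL γ 0 r h0 hr
  rw [show (L:ℤ)*0 + r = r by ring] at h
  rw [h]
  simp

lemma assemble_eval_neg (f : Equiv.Perm V) (L : ℕ) (hL : 0 < L) (γ : ℤ → V) :
    (fun i : ℤ => (f ^ (i / (L:ℤ))) (γ (i % (L:ℤ)))) (-1) = f⁻¹ (γ ((L:ℤ) - 1)) := by
  have h := assemble_apply f L hL γ (-1) ((L:ℤ)-1) (by omega) (by omega)
  rw [show (L:ℤ)*(-1) + ((L:ℤ)-1) = -1 by ring] at h
  rw [h, zpow_neg_one]

lemma assemble (hacyc : T.IsAcyclic) (f : Equiv.Perm V)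
    (hf : ∀ u w, T.Adj u w ↔ T.Adj (f u) (f w))
    (L : ℕ) (hL : 2 ≤ L) (γ : ℤ → V)
    (hadj : ∀ r : ℤ, 0 ≤ r → r < L → T.Adj (γ r) (γ (r+1)))
    (hwrap : γ L = f (γ 0))
    (hnb : ∀ r : ℤ, 0 ≤ r → r + 2 ≤ L → γ (r + 2) ≠ γ r)
    (hjunc : f (γ 1) ≠ γ ((L:ℤ) - 1)) :
    IsTransAxis T f (fun i : ℤ => (f ^ (i / (L:ℤ))) (γ (i % (L:ℤ)))) L := by
  have hL' : (0:ℤ) < L := by positivity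
  set p := fun i : ℤ => (f ^ (i / (L:ℤ))) (γ (i % (L:ℤ))) with hp
  have hrep : ∀ i : ℤ, ∃ q r : ℤ, 0 ≤ r ∧ r < L ∧ i = L*q + r := by
    intro i
    exact ⟨i / L, i % L, Int.emod_nonneg i hL'.ne', Int.emod_lt_of_pos i hL',
      (Int.mul_ediv_add_emod i L).symm⟩
  have happ : ∀ q r : ℤ, 0 ≤ r → r < L → p ((L:ℤ)*q+r) = (f^q) (γ r) :=
    fun q r h0 hr => assemble_apply f L (by omega) γ q r h0 hr
  have happ' : ∀ q r : ℤ, 0 ≤ r → r ≤ L → p ((L:ℤ)*q+r) = (f^q) (γ r) := by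
    intro q r h0 hr
    rcases lt_or_eq_of_le hr with hlt | rfl
    · exact happ q r h0 hlt
    · rw [show (L:ℤ)*q + L = (L:ℤ)*(q+1) + 0 by ring, happ (q+1) 0 le_rfl hL',
        zpow_succ_apply, hwrap, zpow_comm_apply]
  have padj : ∀ i : ℤ, T.Adj (p i) (p (i + 1)) := by
    intro i
    obtain ⟨q, r, h0, hr, rfl⟩ := hrep i
    rw [happ q r h0 hr, show (L:ℤ)*q + r + 1 = (L:ℤ)*q + (r+1) by ring,
      happ' q (r+1) (by omega) (by omega)]
    exact (adj_transfer_zpow f hf q _ _).mp (hadj r h0 hr)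
  have pnb : ∀ i : ℤ, p (i + 2) ≠ p i := by
    intro i
    obtain ⟨q, r, h0, hr, rfl⟩ := hrep i
    rcases le_or_gt (r + 2) (L:ℤ) with hle | hgt
    · rw [happ q r h0 hr, show (L:ℤ)*q + r + 2 = (L:ℤ)*q + (r+2) by ring,
        happ' q (r+2) (by omega) hle]
      intro hc
      exact hnb r h0 hle ((f^q).injective hc)
    · have hr1 : r = (L:ℤ) - 1 := by omega
      subst hr1
      rw [happ q _ h0 hr, show (L:ℤ)*q + ((L:ℤ)-1) + 2 = (L:ℤ)*(q+1) + 1 by ring,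
        happ (q+1) 1 (by omega) (by omega), zpow_succ_apply, zpow_comm_apply]
      intro hc
      exact hjunc ((f^q).injective hc)
  refine ⟨line_injective hacyc p padj pnb, padj, by omega, ?_⟩
  intro i
  obtain ⟨q, r, h0, hr, rfl⟩ := hrep i
  rw [happ q r h0 hr, show (L:ℤ)*q + r + (L:ℕ) = (L:ℤ)*(q+1) + r by push_cast; ring,
    happ (q+1) r h0 hr, zpow_succ_apply]

lemma walk_getVert_inj : ∀ {u v : V} (w : T.Walk u v), w.IsPath →
    ∀ m, m ≤ w.length → ∀ n, n ≤ w.length → w.getVert m = w.getVert n → m = n := by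
  intro u v w
  induction w with
  | nil => intro _ m hm n hn _; simp only [Walk.length_nil, Nat.le_zero] at hm hn; omega
  | @cons a b c ha q ih =>
    intro hw m hm n hn he
    rw [Walk.cons_isPath_iff] at hw
    simp only [Walk.length_cons] at hm hn
    match m, n with
    | 0, 0 => rfl
    | 0, n+1 =>
      exfalso
      apply hw.2
      rw [Walk.mem_support_iff_exists_getVert]
      refine ⟨n, ?_, by omega⟩
      have : (Walk.cons ha q).getVert 0 = (Walk.cons ha q).getVert (n+1) := he
      rw [Walk.getVert_zero, Walk.getVert_cons_succ] at this
      exact this.symm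
    | m+1, 0 =>
      exfalso
      apply hw.2
      rw [Walk.mem_support_iff_exists_getVert]
      refine ⟨m, ?_, by omega⟩
      have : (Walk.cons ha q).getVert (m+1) = (Walk.cons ha q).getVert 0 := he
      rw [Walk.getVert_zero, Walk.getVert_cons_succ] at this
      exact this
    | m+1, n+1 =>
      have := ih hw.1 m (by omega) n (by omega)
        (by simpa only [Walk.getVert_cons_succ] using he)
      omega

end TC14

section
open TC14 SimpleGraph

/-- Suppose `g, h` are hyperbolic automorphisms of the tree `T` (with
axes `pg, ph` and translation lengths `lg, lh`) which are translation compatible.  Then: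
(i) the product `g h` is hyperbolic and translation compatible with both `g` and `h`;
(ii) `ω₋(g) ≠ ω₊(h)`, i.e. the backward ray of `g` and the forward ray of `h` meet in
only finitely many vertices; (iii) `g⁻¹` and `h⁻¹` (with the reversed axes) are
translation compatible. -/
theorem transCompat_facts {V : Type*} (T : SimpleGraph V) (hT : T.IsTree)
    (g h : Equiv.Perm V)
    (hg : ∀ u w : V, T.Adj u w ↔ T.Adj (g u) (g w))
    (hh : ∀ u w : V, T.Adj u w ↔ T.Adj (h u) (h w))
    (pg ph : ℤ → V) (lg lh : ℕ)
    (hpg : IsTransAxis T g pg lg) (hph : IsTransAxis T h ph lh)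
    (hcomp : TransCompat pg ph) :
    (∃ p : ℤ → V, ∃ l : ℕ, IsTransAxis T (g * h) p l ∧
      TransCompat p pg ∧ TransCompat p ph) ∧
    ((Set.range fun n : ℕ => pg (-(n : ℤ))) ∩ Set.range fun n : ℕ => ph (n : ℤ)).Finite ∧
    (IsTransAxis T g⁻¹ (fun i => pg (-i)) lg ∧ IsTransAxis T h⁻¹ (fun i => ph (-i)) lh ∧
      TransCompat (fun i => pg (-i)) (fun i => ph (-i))) := by
  classical
  have hacyc : T.IsAcyclic := hT.IsAcyclic
  have hlg : 1 ≤ lg := hpg.2.2.1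
  have hlh : 1 ≤ lh := hph.2.2.1
  have hgtr : ∀ i : ℤ, g (pg i) = pg (i + lg) := hpg.2.2.2
  have hhtr : ∀ i : ℤ, h (ph i) = ph (i + lh) := hph.2.2.2
  have hginv : ∀ i : ℤ, g⁻¹ (pg i) = pg (i - lg) := by
    intro i
    have h2 := hgtr (i - lg)
    rw [sub_add_cancel] at h2
    rw [← h2, ← Equiv.Perm.mul_apply, inv_mul_cancel, Equiv.Perm.one_apply]
  have hhinv : ∀ i : ℤ, h⁻¹ (ph i) = ph (i - lh) := by
    intro i
    have h2 := hhtr (i - lh)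
    rw [sub_add_cancel] at h2
    rw [← h2, ← Equiv.Perm.mul_apply, inv_mul_cancel, Equiv.Perm.one_apply]
  have hfadj : ∀ u w, T.Adj u w ↔ T.Adj ((g*h) u) ((g*h) w) := by
    intro u w
    rw [hh u w, hg (h u) (h w)]
    rfl
  have hfinvg : ∀ y : V, (g*h)⁻¹ (g y) = h⁻¹ y := by
    intro y
    simp [mul_inv_rev]
  -- Part (ii)
  have partii : ((Set.range fun n : ℕ => pg (-(n : ℤ))) ∩
      Set.range fun n : ℕ => ph (n : ℤ)).Finite := by
    set N : Set ℕ := {n | ∃ m : ℕ, pg (-(n:ℤ)) = ph (m:ℤ)} with hN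
    have hsub : ((Set.range fun n : ℕ => pg (-(n : ℤ))) ∩
        Set.range fun n : ℕ => ph (n : ℤ)) ⊆ (fun n : ℕ => pg (-(n:ℤ))) '' N := by
      rintro x ⟨⟨n, rfl⟩, ⟨m, hm⟩⟩
      exact ⟨n, ⟨m, hm.symm⟩, rfl⟩
    refine Set.Finite.subset (Set.Finite.image _ ?_) hsub
    rcases Set.eq_empty_or_nonempty N with hNe | hNe
    · rw [hNe]; exact Set.finite_empty
    · obtain ⟨n₀, hn₀⟩ := hNe
      have hFex : ∀ n : ℕ, ∃ m : ℕ, n ∈ N → pg (-(n:ℤ)) = ph (m:ℤ) := by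
        intro n
        by_cases hn : n ∈ N
        · obtain ⟨m, hm⟩ := hn
          exact ⟨m, fun _ => hm⟩
        · exact ⟨0, fun hc => absurd hc hn⟩
      choose F hFs using hFex
      have hlt : ∀ n ∈ N, n₀ < n → F n < F n₀ := by
        intro n hn hgt
        have h1 := hFs n hn
        have h2 := hFs n₀ hn₀
        have := hcomp (-(n:ℤ)) (-(n₀:ℤ)) (F n) (F n₀) h1 h2
        have hle : (F n : ℤ) ≤ F n₀ := this.mp (by omega)
        have hne : F n ≠ F n₀ := by
          intro hc
          rw [hc] at h1
          have := hpg.1 (h1.trans h2.symm)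
          omega
        omega
      have hNsplit : N ⊆ (Set.Iic n₀) ∪ {n ∈ N | n₀ < n} := by
        intro n hn
        by_cases hle : n ≤ n₀
        · exact Or.inl hle
        · exact Or.inr ⟨hn, by omega⟩
      refine Set.Finite.subset (Set.Finite.union (Set.finite_Iic n₀) ?_) hNsplit
      have himg : F '' {n ∈ N | n₀ < n} ⊆ Set.Iio (F n₀) := by
        rintro x ⟨n, ⟨hn, hgt⟩, rfl⟩
        exact hlt n hn hgt
      refine Set.Finite.of_finite_image (Set.Finite.subset (Set.finite_Iio (F n₀)) himg) ?_
      intro x ⟨hx, _⟩ y ⟨hy, _⟩ hxy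
      have h1 := hFs x hx
      have h2 := hFs y hy
      rw [hxy] at h1
      have := hpg.1 (h1.trans h2.symm)
      omega
  -- Part (iii)
  have partiii : IsTransAxis T g⁻¹ (fun i => pg (-i)) lg ∧
      IsTransAxis T h⁻¹ (fun i => ph (-i)) lh ∧
      TransCompat (fun i => pg (-i)) (fun i => ph (-i)) := by
    refine ⟨⟨fun a b hab => neg_inj.mp (hpg.1 hab), ?_, hlg, ?_⟩,
      ⟨fun a b hab => neg_inj.mp (hph.1 hab), ?_, hlh, ?_⟩, ?_⟩
    · intro i
      have := (hpg.2.1 (-i - 1)).symm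
      rw [sub_add_cancel] at this
      show T.Adj (pg (-i)) (pg (-(i+1)))
      rw [show -(i+1) = -i - 1 by ring]
      exact this
    · intro i
      show g⁻¹ (pg (-i)) = pg (-(i + lg))
      rw [hginv]
      ring_nf
    · intro i
      have := (hph.2.1 (-i - 1)).symm
      rw [sub_add_cancel] at this
      show T.Adj (ph (-i)) (ph (-(i+1)))
      rw [show -(i+1) = -i - 1 by ring]
      exact this
    · intro i
      show h⁻¹ (ph (-i)) = ph (-(i + lh))
      rw [hhinv]
      ring_nf
    · intro i j i' j' h1 h2
      have hc := hcomp (-j) (-i) (-j') (-i') h2 h1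
      constructor
      · intro hij
        have := hc.mp (by omega)
        omega
      · intro hij
        have := hc.mpr (by omega)
        omega
  refine ⟨?_, partii, partiii⟩
  -- Part (i)
  by_cases hABe : ∃ i i' : ℤ, pg i = ph i'
  · by_cases hbdd : ∃ b : ℤ, ∀ i : ℤ, (∃ i', pg i = ph i') → i ≤ b
    · -- Case 1b : axes meet, intersection bounded above
      obtain ⟨M, ⟨t, hMt⟩, hmax⟩ :=
        Int.exists_greatest_of_bdd (P := fun z => ∃ i', pg z = ph i') hbdd hABe
      have fact1 : ∀ i', ph (t+1) ≠ pg i' := by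
        intro i' hc
        have hle : i' ≤ M := hmax i' ⟨t+1, hc.symm⟩
        have := (hcomp i' M (t+1) t hc.symm hMt).mp hle
        omega
      have fact2 : ∀ j', pg (M+1) ≠ ph j' := by
        intro j' hc
        have := hmax (M+1) ⟨j', hc⟩
        omega
      set L : ℕ := lg + lh with hLdef
      set γ : ℤ → V := fun r => if r ≤ (lg:ℤ) then pg (M + r) else g (ph (t + r - lg))
        with hγ
      have ev1 : ∀ r : ℤ, r ≤ (lg:ℤ) → γ r = pg (M + r) := by
        intro r hr
        simp only [hγ]
        rw [if_pos hr]
      have ev2 : ∀ r : ℤ, (lg:ℤ) ≤ r → γ r = g (ph (t + r - lg)) := by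
        intro r hr
        rcases eq_or_lt_of_le hr with heq | hlt
        · subst heq
          rw [ev1 _ le_rfl, show t + (lg:ℤ) - lg = t by ring, ← hMt, hgtr M]
        · simp only [hγ]
          rw [if_neg (by omega)]
      have hadjγ : ∀ r : ℤ, 0 ≤ r → r < (L:ℤ) → T.Adj (γ r) (γ (r+1)) := by
        intro r h0 hr
        rcases lt_or_ge r (lg:ℤ) with h1 | h1
        · rw [ev1 r (by omega), ev1 (r+1) (by omega)]
          have := hpg.2.1 (M + r)
          rwa [show M + r + 1 = M + (r+1) by ring] at this
        · rw [ev2 r h1, ev2 (r+1) (by omega)]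
          have := (hg _ _).mp (hph.2.1 (t + r - lg))
          rwa [show t + r - lg + 1 = t + (r+1) - lg by ring] at this
      have hwrapγ : γ (L:ℤ) = (g*h) (γ 0) := by
        rw [ev2 (L:ℤ) (by omega), ev1 0 (by omega), add_zero, hMt]
        show g (ph (t + (L:ℤ) - lg)) = g (h (ph t))
        rw [hhtr t, show t + (L:ℤ) - lg = t + lh by omega]
      have hnbγ : ∀ r : ℤ, 0 ≤ r → r + 2 ≤ (L:ℤ) → γ (r + 2) ≠ γ r := by
        intro r h0 hr2
        rcases le_or_gt (r+2) (lg:ℤ) with h1 | h1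
        · rw [ev1 r (by omega), ev1 (r+2) h1]
          intro hc
          have := hpg.1 hc
          omega
        · rcases le_or_gt r ((lg:ℤ) - 1) with h2 | h2
          · rw [ev1 r (by omega), ev2 (r+2) (by omega)]
            intro hc
            have hc2 := congrArg (fun x => g⁻¹ x) hc
            simp only [← Equiv.Perm.mul_apply, inv_mul_cancel, Equiv.Perm.one_apply] at hc2
            rw [hginv] at hc2
            rw [show t + (r+2) - lg = t + 1 by omega] at hc2
            exact fact1 _ hc2
          · rw [ev2 r (by omega), ev2 (r+2) (by omega)]
            intro hc
            have := hph.1 (g.injective hc)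
            omega
      have hjuncγ : (g*h) (γ 1) ≠ γ ((L:ℤ) - 1) := by
        rw [ev2 ((L:ℤ)-1) (by omega), ev1 1 (by omega)]
        intro hc
        rw [show (g*h) (pg (M+1)) = g (h (pg (M+1))) from rfl] at hc
        have hc2 := g.injective hc
        have hc3 := congrArg (fun x => h⁻¹ x) hc2
        simp only [← Equiv.Perm.mul_apply, inv_mul_cancel, Equiv.Perm.one_apply] at hc3
        rw [hhinv] at hc3
        exact fact2 _ hc3
      have haxis := assemble hacyc (g*h) hfadj L (by omega) γ hadjγ hwrapγ hnbγ hjuncγ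
      have p0 : (fun i : ℤ => ((g*h) ^ (i / (L:ℤ))) (γ (i % (L:ℤ)))) 0 = pg M := by
        rw [assemble_eval (g*h) L (by omega) γ 0 (by omega) (by omega), ev1 0 (by omega),
          add_zero]
      have p1 : (fun i : ℤ => ((g*h) ^ (i / (L:ℤ))) (γ (i % (L:ℤ)))) 1 = pg (M+1) := by
        rw [assemble_eval (g*h) L (by omega) γ 1 (by omega) (by omega), ev1 1 (by omega)]
      have pm1 : (fun i : ℤ => ((g*h) ^ (i / (L:ℤ))) (γ (i % (L:ℤ)))) (-1) = ph (t-1) := by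
        rw [assemble_eval_neg (g*h) L (by omega) γ, ev2 ((L:ℤ)-1) (by omega), hfinvg, hhinv]
        congr 1
        omega
      refine ⟨_, L, haxis, ?_, ?_⟩
      · exact transCompat_of_pair hacyc _ pg haxis.2.1 haxis.1 hpg.2.1 hpg.1
          (show (0:ℤ) < 1 by omega) (show M < M + 1 by omega) p0 p1
      · exact transCompat_of_pair hacyc _ ph haxis.2.1 haxis.1 hph.2.1 hph.1
          (show (-1:ℤ) < 0 by omega) (show t - 1 < t by omega) pm1 (p0.trans hMt)
    · -- Case 1c : axes meet, intersection unbounded above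
      push_neg at hbdd
      obtain ⟨s, t, hst⟩ := hABe
      have hseg : ∀ r : ℕ, pg (s + r) = ph (t + r) := by
        intro r
        obtain ⟨j, ⟨j', hjj⟩, hjgt⟩ := hbdd (s + r)
        have horient : t ≤ j' := (hcomp s j t j' hst hjj).mp (by omega)
        have habs := common_natAbs hacyc pg ph hpg.2.1 hpg.1 hph.2.1 hph.1 hst hjj
        set n : ℕ := (j - s).toNat with hn
        have hj2 : pg (s + (n:ℤ)) = ph (t + (n:ℤ)) := by
          rw [show s + (n:ℤ) = j by omega, show t + (n:ℤ) = j' by omega]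
          exact hjj
        exact common_seg hacyc pg ph hpg.2.1 hpg.1 hph.2.1 hph.1 hst n hj2 r (by omega)
      set L : ℕ := lg + lh with hLdef
      set γ : ℤ → V := fun r => pg (s + r) with hγ
      have hfray : ∀ r : ℕ, (g*h) (pg (s + r)) = pg (s + r + L) := by
        intro r
        show g (h (pg (s + r))) = _
        rw [hseg r, hhtr, show t + (r:ℤ) + lh = t + ((r + lh : ℕ):ℤ) by push_cast; ring,
          ← hseg (r + lh), show s + ((r+lh:ℕ):ℤ) = s + r + lh by push_cast; ring, hgtr]
        congr 1
        push_cast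
        omega
      have hadjγ : ∀ r : ℤ, 0 ≤ r → r < (L:ℤ) → T.Adj (γ r) (γ (r+1)) := by
        intro r _ _
        show T.Adj (pg (s + r)) (pg (s + (r+1)))
        have := hpg.2.1 (s + r)
        rwa [show s + r + 1 = s + (r+1) by ring] at this
      have hwrapγ : γ (L:ℤ) = (g*h) (γ 0) := by
        show pg (s + (L:ℤ)) = (g*h) (pg (s + 0))
        rw [show s + (0:ℤ) = s + ((0:ℕ):ℤ) by norm_num, hfray 0]
        congr 1
        push_cast
        ring
      have hnbγ : ∀ r : ℤ, 0 ≤ r → r + 2 ≤ (L:ℤ) → γ (r + 2) ≠ γ r := by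
        intro r _ _ hc
        have := hpg.1 hc
        omega
      have hjuncγ : (g*h) (γ 1) ≠ γ ((L:ℤ) - 1) := by
        show (g*h) (pg (s + 1)) ≠ pg (s + ((L:ℤ)-1))
        rw [show s + (1:ℤ) = s + ((1:ℕ):ℤ) by norm_num, hfray 1]
        intro hc
        have := hpg.1 hc
        omega
      have haxis := assemble hacyc (g*h) hfadj L (by omega) γ hadjγ hwrapγ hnbγ hjuncγ
      have p0 : (fun i : ℤ => ((g*h) ^ (i / (L:ℤ))) (γ (i % (L:ℤ)))) 0 = pg s := by
        rw [assemble_eval (g*h) L (by omega) γ 0 (by omega) (by omega)]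
        show pg (s + 0) = pg s
        rw [add_zero]
      have p1 : (fun i : ℤ => ((g*h) ^ (i / (L:ℤ))) (γ (i % (L:ℤ)))) 1 = pg (s+1) := by
        rw [assemble_eval (g*h) L (by omega) γ 1 (by omega) (by omega)]
      have q0 : (fun i : ℤ => ((g*h) ^ (i / (L:ℤ))) (γ (i % (L:ℤ)))) 0 = ph t := by
        rw [p0, ← add_zero s, show s + (0:ℤ) = s + ((0:ℕ):ℤ) by norm_num, hseg 0]
        norm_num
      have q1 : (fun i : ℤ => ((g*h) ^ (i / (L:ℤ))) (γ (i % (L:ℤ)))) 1 = ph (t+1) := by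
        rw [p1, show s + (1:ℤ) = s + ((1:ℕ):ℤ) by norm_num, hseg 1]
        norm_num
      refine ⟨_, L, haxis, ?_, ?_⟩
      · exact transCompat_of_pair hacyc _ pg haxis.2.1 haxis.1 hpg.2.1 hpg.1
          (show (0:ℤ) < 1 by omega) (show s < s + 1 by omega) p0 p1
      · exact transCompat_of_pair hacyc _ ph haxis.2.1 haxis.1 hph.2.1 hph.1
          (show (0:ℤ) < 1 by omega) (show t < t + 1 by omega) q0 q1
  · -- Case 2 : disjoint axes
    push_neg at hABe
    have hconn : T.Connected := hT.isConnected
    set D : Set ℕ := {n | ∃ i i' : ℤ, T.dist (pg i) (ph i') = n} with hD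
    have hDne : D.Nonempty := ⟨T.dist (pg 0) (ph 0), 0, 0, rfl⟩
    set k : ℕ := sInf D with hkdef
    obtain ⟨α, β, hk⟩ : ∃ i i' : ℤ, T.dist (pg i) (ph i') = k := Nat.sInf_mem hDne
    have hmin : ∀ i i' : ℤ, k ≤ T.dist (pg i) (ph i') := fun i i' => Nat.sInf_le ⟨i, i', rfl⟩
    have hk1 : 1 ≤ k := by
      rcases Nat.eq_zero_or_pos k with h0 | h1
      · exfalso
        rw [h0] at hk
        exact hABe α β (hconn.dist_eq_zero_iff.mp hk)
      · exact h1
    obtain ⟨w, hwp, hwl⟩ := hconn.exists_path_of_dist (pg α) (ph β)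
    have hwlk : w.length = k := by rw [hwl, hk]
    set c : ℕ → V := w.getVert with hc
    have c0 : c 0 = pg α := Walk.getVert_zero w
    have ck : c k = ph β := by
      rw [hc, ← hwlk]
      exact Walk.getVert_length w
    have cadj : ∀ r : ℕ, r < k → T.Adj (c r) (c (r+1)) := by
      intro r hr
      exact w.adj_getVert_succ (by omega)
    have cinj : ∀ m, m ≤ k → ∀ n, n ≤ k → c m = c n → m = n := by
      intro m hm n hn
      exact walk_getVert_inj w hwp m (by omega) n (by omega)
    have dB : ∀ m : ℕ, m ≤ k → T.dist (c (k - m)) (ph β) ≤ m := by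
      intro m
      induction m with
      | zero =>
        intro _
        rw [Nat.sub_zero, ck]
        simp [SimpleGraph.dist_self]
      | succ m ih =>
        intro hm
        have ht := hconn.dist_triangle (u := c (k - (m+1))) (v := c (k - m)) (w := ph β)
        have hd1 : T.dist (c (k-(m+1))) (c (k-m)) = 1 := by
          rw [SimpleGraph.dist_eq_one_iff_adj]
          have := cadj (k - m - 1) (by omega)
          convert this using 2 <;> omega
        have := ih (by omega)
        omega
    have dA : ∀ m : ℕ, m ≤ k → T.dist (pg α) (c m) ≤ m := by
      intro m
      induction m with
      | zero =>
        intro _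
        rw [c0]
        simp [SimpleGraph.dist_self]
      | succ m ih =>
        intro hm
        have ht := hconn.dist_triangle (u := pg α) (v := c m) (w := c (m+1))
        have hd1 : T.dist (c m) (c (m+1)) = 1 := by
          rw [SimpleGraph.dist_eq_one_iff_adj]
          exact cadj m (by omega)
        have := ih (by omega)
        omega
    have notA : ∀ r : ℕ, 1 ≤ r → r ≤ k → ∀ i, c r ≠ pg i := by
      intro r h1 hr i hcc
      have h2 := dB (k - r) (by omega)
      rw [show k - (k - r) = r by omega, hcc] at h2
      have := hmin i β
      omega
    have notB : ∀ r : ℕ, r < k → ∀ i', c r ≠ ph i' := by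
      intro r hr i' hcc
      have h2 := dA r (by omega)
      rw [hcc] at h2
      have := hmin α i'
      omega
    have notAg : ∀ (m : ℕ), 1 ≤ m → m ≤ k → ∀ i, g (c m) ≠ pg i := by
      intro m h1 hm i hcc
      have h2 := congrArg (fun x => g⁻¹ x) hcc
      simp only [← Equiv.Perm.mul_apply, inv_mul_cancel, Equiv.Perm.one_apply] at h2
      rw [hginv] at h2
      exact notA m h1 hm _ h2
    set L : ℕ := 2*k + lg + lh with hLdef
    set γ : ℤ → V := fun r =>
      if r ≤ (k:ℤ) then c ((k:ℤ) - r).toNat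
      else if r ≤ (k:ℤ) + lg then pg (α + r - k)
      else if r ≤ 2*(k:ℤ) + lg then g (c (r - k - lg).toNat)
      else g (ph (β + r - 2*k - lg)) with hγ
    have ev1 : ∀ r : ℤ, r ≤ (k:ℤ) → γ r = c ((k:ℤ) - r).toNat := by
      intro r hr
      simp only [hγ]
      rw [if_pos hr]
    have ev2 : ∀ r : ℤ, (k:ℤ) ≤ r → r ≤ (k:ℤ) + lg → γ r = pg (α + r - k) := by
      intro r h1 h2
      rcases eq_or_lt_of_le h1 with heq | hlt
      · rw [← heq, ev1 _ le_rfl, show (k:ℤ) - k = 0 by ring]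
        rw [show ((0:ℤ)).toNat = 0 from rfl, c0, show α + (k:ℤ) - k = α by ring]
      · simp only [hγ]
        rw [if_neg (by omega), if_pos h2]
    have ev3 : ∀ r : ℤ, (k:ℤ) + lg ≤ r → r ≤ 2*(k:ℤ) + lg →
        γ r = g (c (r - k - lg).toNat) := by
      intro r h1 h2
      rcases eq_or_lt_of_le h1 with heq | hlt
      · rw [← heq, ev2 _ (by omega) le_rfl, show α + ((k:ℤ)+lg) - k = α + lg by ring,
          ← hgtr α, show ((k:ℤ) + lg - k - lg) = 0 by ring,
          show ((0:ℤ)).toNat = 0 from rfl, c0]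
      · simp only [hγ]
        rw [if_neg (by omega), if_neg (by omega), if_pos h2]
    have ev4 : ∀ r : ℤ, 2*(k:ℤ) + lg ≤ r → γ r = g (ph (β + r - 2*k - lg)) := by
      intro r h1
      rcases eq_or_lt_of_le h1 with heq | hlt
      · rw [← heq, ev3 _ (by omega) le_rfl, show 2*(k:ℤ)+lg - k - lg = (k:ℤ) by ring,
          show ((k:ℤ)).toNat = k by omega, ck, show β + (2*(k:ℤ)+lg) - 2*k - lg = β by ring]
      · simp only [hγ]
        rw [if_neg (by omega), if_neg (by omega), if_neg (by omega)]
    have hadjγ : ∀ r : ℤ, 0 ≤ r → r < (L:ℤ) → T.Adj (γ r) (γ (r+1)) := by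
      intro r h0 hr
      rcases lt_or_ge r (k:ℤ) with h1 | h1
      · rw [ev1 r (by omega), ev1 (r+1) (by omega)]
        have hadj2 := cadj ((k:ℤ) - r - 1).toNat (by omega)
        have hmm : ((k:ℤ) - r).toNat = ((k:ℤ) - r - 1).toNat + 1 := by omega
        rw [show (k:ℤ) - (r+1) = (k:ℤ) - r - 1 by ring, hmm]
        exact hadj2.symm
      · rcases lt_or_ge r ((k:ℤ) + lg) with h2 | h2
        · rw [ev2 r h1 (by omega), ev2 (r+1) (by omega) (by omega)]
          have := hpg.2.1 (α + r - k)
          rwa [show α + r - k + 1 = α + (r+1) - k by ring] at this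
        · rcases lt_or_ge r (2*(k:ℤ) + lg) with h3 | h3
          · rw [ev3 r h2 (by omega), ev3 (r+1) (by omega) (by omega)]
            have hadj2 := (hg _ _).mp (cadj (r - k - lg).toNat (by omega))
            have hmm : ((r+1) - k - lg).toNat = (r - k - lg).toNat + 1 := by omega
            rw [hmm]
            exact hadj2
          · rw [ev4 r h3, ev4 (r+1) (by omega)]
            have := (hg _ _).mp (hph.2.1 (β + r - 2*k - lg))
            rwa [show β + r - 2*k - lg + 1 = β + (r+1) - 2*k - lg by ring] at this
    have hwrapγ : γ (L:ℤ) = (g*h) (γ 0) := by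
      rw [ev4 (L:ℤ) (by omega), ev1 0 (by omega), show (k:ℤ) - 0 = (k:ℤ) by ring,
        show ((k:ℤ)).toNat = k by omega, ck]
      show g (ph (β + (L:ℤ) - 2*k - lg)) = g (h (ph β))
      rw [hhtr β, show β + (L:ℤ) - 2*k - lg = β + lh by omega]
    have hnbγ : ∀ r : ℤ, 0 ≤ r → r + 2 ≤ (L:ℤ) → γ (r + 2) ≠ γ r := by
      intro r h0 hr2 hcc
      rcases le_or_gt (r+2) (k:ℤ) with h1 | h1
      · -- both on bridge
        rw [ev1 r (by omega), ev1 (r+2) (by omega)] at hcc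
        have := cinj _ (by omega) _ (by omega) hcc
        omega
      · rcases le_or_gt r ((k:ℤ)-1) with h2 | h2
        · -- r = k-1 : c 1 vs pg (α+1)
          rw [ev1 r (by omega), ev2 (r+2) (by omega) (by omega)] at hcc
          have : c (((k:ℤ)) - r).toNat = pg (α + (r+2) - k) := hcc.symm
          exact notA ((k:ℤ) - r).toNat (by omega) (by omega) _ this
        · rcases le_or_gt r (k:ℤ) with h3 | h3
          · -- r = k
            rcases le_or_gt (r+2) ((k:ℤ) + lg) with h4 | h4
            · rw [ev2 r (by omega) (by omega), ev2 (r+2) (by omega) h4] at hcc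
              have := hpg.1 hcc
              omega
            · -- lg = 1, r = k, r+2 = k+lg+1
              rw [ev2 r (by omega) (by omega), ev3 (r+2) (by omega) (by omega)] at hcc
              exact notAg ((r+2) - k - lg).toNat (by omega) (by omega) _ hcc
          · rcases le_or_gt (r+2) ((k:ℤ) + lg) with h4 | h4
            · -- both in pg part
              rw [ev2 r (by omega) (by omega), ev2 (r+2) (by omega) h4] at hcc
              have := hpg.1 hcc
              omega
            · rcases le_or_gt r ((k:ℤ) + lg) with h5 | h5
              · -- r ≤ k+lg < r+2, r > k : r = k+lg-1 or r = k+lg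
                rcases le_or_gt r ((k:ℤ) + lg - 1) with h6 | h6
                · -- r = k+lg-1 : pg(α+lg-1) vs g (c 1)
                  rw [ev2 r (by omega) (by omega), ev3 (r+2) (by omega) (by omega)] at hcc
                  exact notAg ((r+2) - k - lg).toNat (by omega) (by omega) _ hcc
                · -- r = k+lg : g (c 0) vs ...
                  rcases le_or_gt (r+2) (2*(k:ℤ) + lg) with h7 | h7
                  · rw [ev3 r (by omega) (by omega), ev3 (r+2) (by omega) h7] at hcc
                    have := cinj _ (by omega) _ (by omega) (g.injective hcc)
                    omega
                  · -- k = 1 : g (ph (β+1)) vs g (c 0) = g (pg α)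
                    rw [ev3 r (by omega) (by omega), ev4 (r+2) (by omega)] at hcc
                    have h8 := g.injective hcc
                    rw [show (r - k - lg).toNat = 0 by omega,  c0] at h8
                    exact hABe α _ h8.symm
              · rcases le_or_gt (r+2) (2*(k:ℤ) + lg) with h7 | h7
                · -- both in g∘c part
                  rw [ev3 r (by omega) (by omega), ev3 (r+2) (by omega) h7] at hcc
                  have := cinj _ (by omega) _ (by omega) (g.injective hcc)
                  omega
                · rcases le_or_gt r (2*(k:ℤ) + lg - 1) with h8 | h8
                  · -- r = 2k+lg-1 : g (c (k-1)) vs g (ph (β+1))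
                    rw [ev3 r (by omega) (by omega), ev4 (r+2) (by omega)] at hcc
                    have h9 := g.injective hcc
                    exact notB (r - k - lg).toNat (by omega) _ h9.symm
                  · rcases le_or_gt r (2*(k:ℤ) + lg) with h9 | h9
                    · -- r = 2k+lg : g (c k) = g (ph β) vs g (ph (β+2))
                      rw [ev3 r (by omega) (by omega), ev4 (r+2) (by omega)] at hcc
                      have h10 := g.injective hcc
                      rw [show (r - k - lg).toNat = k by omega, ck] at h10
                      have := hph.1 h10
                      omega
                    · -- both in g∘ph part
                      rw [ev4 r (by omega), ev4 (r+2) (by omega)] at hcc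
                      have := hph.1 (g.injective hcc)
                      omega
    have hjuncγ : (g*h) (γ 1) ≠ γ ((L:ℤ) - 1) := by
      rw [ev1 1 (by omega), ev4 ((L:ℤ)-1) (by omega)]
      intro hcc
      rw [show (g*h) (c ((k:ℤ)-1).toNat) = g (h (c ((k:ℤ)-1).toNat)) from rfl] at hcc
      have h2 := g.injective hcc
      have h3 := congrArg (fun x => h⁻¹ x) h2
      simp only [← Equiv.Perm.mul_apply, inv_mul_cancel, Equiv.Perm.one_apply] at h3
      rw [hhinv] at h3
      exact notB ((k:ℤ)-1).toNat (by omega) _ h3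
    have haxis := assemble hacyc (g*h) hfadj L (by omega) γ hadjγ hwrapγ hnbγ hjuncγ
    have pk : (fun i : ℤ => ((g*h) ^ (i / (L:ℤ))) (γ (i % (L:ℤ)))) (k:ℤ) = pg α := by
      rw [assemble_eval (g*h) L (by omega) γ (k:ℤ) (by omega) (by omega),
        ev2 (k:ℤ) le_rfl (by omega), show α + (k:ℤ) - k = α by ring]
    have pk1 : (fun i : ℤ => ((g*h) ^ (i / (L:ℤ))) (γ (i % (L:ℤ)))) ((k:ℤ)+1) = pg (α+1) := by
      rw [assemble_eval (g*h) L (by omega) γ ((k:ℤ)+1) (by omega) (by omega),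
        ev2 ((k:ℤ)+1) (by omega) (by omega), show α + ((k:ℤ)+1) - k = α + 1 by ring]
    have q0 : (fun i : ℤ => ((g*h) ^ (i / (L:ℤ))) (γ (i % (L:ℤ)))) 0 = ph β := by
      rw [assemble_eval (g*h) L (by omega) γ 0 (by omega) (by omega), ev1 0 (by omega),
        show (k:ℤ) - 0 = (k:ℤ) by ring, show ((k:ℤ)).toNat = k by omega, ck]
    have qm1 : (fun i : ℤ => ((g*h) ^ (i / (L:ℤ))) (γ (i % (L:ℤ)))) (-1) = ph (β-1) := by
      rw [assemble_eval_neg (g*h) L (by omega) γ, ev4 ((L:ℤ)-1) (by omega), hfinvg, hhinv]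
      congr 1
      omega
    refine ⟨_, L, haxis, ?_, ?_⟩
    · exact transCompat_of_pair hacyc _ pg haxis.2.1 haxis.1 hpg.2.1 hpg.1
        (show (k:ℤ) < (k:ℤ) + 1 by omega) (show α < α + 1 by omega) pk pk1
    · exact transCompat_of_pair hacyc _ ph haxis.2.1 haxis.1 hph.2.1 hph.1
        (show (-1:ℤ) < 0 by omega) (show β - 1 < β by omega) qm1 q0

end
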